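/- Let X be a nonempty finite type, p_data a probability distribution on X, and K : (X → ℝ) → ℝ a convex function differentiable at p_data; write ∂K/∂p(x) for the Fréchet derivative of K at p_data applied to the x-th coordinate basis vector. Fix λ ∈ ℝ and μ : X → ℝ with μ(x) = 0 whenever p_data(x) > 0 and μ(x) ≥ 0 whenever p_data(x) = 0, and define c*(x) = −∂K/∂p(x)|_{p=p_data} − λ + μ(x). Then (p_data, c*) is a saddle point of the minimax objective L(p, c) = ∑_x p(x)·c(x) − ∑_x p_data(x)·c(x) + K(p) over probability distributions p and arbitrary cost functions c : X → ℝ; that is, for every cost function c : X → ℝ one has L(p_data, c) = K(p_data), and for every probability distribution p on X one has L(p, c*) ≥ K(p_data) = L(p_data, c*). -/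

import Mathlib

/-- Gradient inequality for a convex function differentiable at a point. -/
lemma convex_grad_ineq {E : Type*} [NormedAddCommGroup E] [NormedSpace ℝ E]
    (K : E → ℝ) (D : E →L[ℝ] ℝ) (hK_conv : ConvexOn ℝ Set.univ K)
    (x v : E) (h : HasFDerivAt K D x) : D v ≤ K (x + v) - K x := by
  have hline : HasDerivAt (fun t : ℝ => x + t • v) v 0 := by
    simpa using ((hasDerivAt_id (0 : ℝ)).smul_const v).const_add x
  have hf : HasDerivAt (fun t : ℝ => K (x + t • v)) (D v) 0 := by
    have h' : HasFDerivAt K D (x + (0:ℝ) • v) := by simpa using h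
    exact h'.comp_hasDerivAt 0 hline
  have htend : Filter.Tendsto (slope (fun t : ℝ => K (x + t • v)) 0)
      (nhdsWithin 0 (Set.Ioi 0)) (nhds (D v)) :=
    (hasDerivAt_iff_tendsto_slope.mp hf).mono_left
      (nhdsWithin_mono _ (by intro t ht; exact ne_of_gt ht))
  refine le_of_tendsto htend ?_
  filter_upwards [Ioo_mem_nhdsGT_of_mem (by norm_num : (0:ℝ) ∈ Set.Ico 0 1)] with t ht
  have ht0 : 0 < t := ht.1
  have ht1 : t ≤ 1 := le_of_lt ht.2
  have hconv := hK_conv.2 (Set.mem_univ x) (Set.mem_univ (x + v))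
      (by linarith : (0:ℝ) ≤ 1 - t) (le_of_lt ht0) (by ring)
  have hxt : (1 - t) • x + t • (x + v) = x + t • v := by
    module
  rw [hxt] at hconv
  rw [slope_def_field]
  simp only [zero_smul, add_zero, sub_zero]
  rw [div_le_iff₀ ht0]
  simp only [smul_eq_mul] at hconv
  nlinarith [hconv]

theorem saddle_point_adversarial_objective
    {X : Type*} [Fintype X] [Nonempty X] [DecidableEq X]
    (p_data : X → ℝ)
    (hp_data_nonneg : ∀ x, 0 ≤ p_data x)
    (hp_data_sum : ∑ x, p_data x = 1)
    (K : (X → ℝ) → ℝ) (D : (X → ℝ) →L[ℝ] ℝ)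
    (hK_conv : ConvexOn ℝ Set.univ K)
    (hK : HasFDerivAt K D p_data)
    (lam : ℝ) (mu : X → ℝ)
    (hmu_supp : ∀ x, 0 < p_data x → mu x = 0)
    (hmu_nonneg : ∀ x, p_data x = 0 → 0 ≤ mu x)
    (cstar : X → ℝ)
    (hcstar : ∀ x, cstar x = -(D (Pi.single x 1)) - lam + mu x) :
    (∀ c : X → ℝ,
      (∑ x, p_data x * c x) - (∑ x, p_data x * c x) + K p_data = K p_data) ∧
    (∀ p : X → ℝ, (∀ x, 0 ≤ p x) → (∑ x, p x = 1) →
      K p_data ≤ (∑ x, p x * cstar x) - (∑ x, p_data x * cstar x) + K p) := by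
  constructor
  · intro c; ring
  · intro p hp hpsum
    set v : X → ℝ := fun x => p x - p_data x with hv
    have hDv : D v = ∑ x, v x * D (Pi.single x 1) := by
      have hrepr : v = ∑ x, v x • (Pi.single x 1 : X → ℝ) := by
        funext j
        simp [Finset.sum_apply, Pi.single_apply]
      calc D v = D (∑ x, v x • (Pi.single x 1 : X → ℝ)) := by rw [← hrepr]
        _ = ∑ x, v x * D (Pi.single x 1) := by
            rw [map_sum]; simp [smul_eq_mul]
    have hmu_zero : ∀ x, p_data x * mu x = 0 := by
      intro x
      rcases lt_or_eq_of_le (hp_data_nonneg x) with h | h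
      · rw [hmu_supp x h, mul_zero]
      · rw [← h, zero_mul]
    have hpmunn : 0 ≤ ∑ x, p x * mu x := by
      apply Finset.sum_nonneg
      intro x _
      rcases lt_or_eq_of_le (hp_data_nonneg x) with h | h
      · rw [hmu_supp x h, mul_zero]
      · exact mul_nonneg (hp x) (hmu_nonneg x h.symm)
    have hsum : (∑ x, p x * cstar x) - (∑ x, p_data x * cstar x)
        = -(D v) + ∑ x, p x * mu x := by
      rw [← Finset.sum_sub_distrib, hDv]
      have : ∀ x, p x * cstar x - p_data x * cstar x
          = -(v x * D (Pi.single x 1)) - lam * v x + (p x * mu x - p_data x * mu x) := by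
        intro x; rw [hcstar x, hv]; ring
      rw [Finset.sum_congr rfl (fun x _ => this x)]
      have hvsum : ∑ x, v x = 0 := by
        simp [hv, Finset.sum_sub_distrib, hpsum, hp_data_sum]
      rw [Finset.sum_add_distrib, Finset.sum_sub_distrib, Finset.sum_sub_distrib,
        ← Finset.sum_neg_distrib, ← Finset.mul_sum, hvsum]
      simp [hmu_zero]
    have hgrad : D v ≤ K p - K p_data := by
      have := convex_grad_ineq K D hK_conv p_data v hK
      have hpv : p_data + v = p := by funext x; simp [hv]
      rwa [hpv] at this
    rw [hsum]
    linarith
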